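/- Let δ > 0, β₀ > 0, β₁ < −δ/(β₀(1 − 2h(x₀))), let x_c ∈ (0, π) be the unique positive solution of sin(x)/x = (δ + β₀β₁)/(2β₀β₁), and set τ_c = x_c²/(2β₀β₁(cos(x_c) − 1)) and ω_c = x_c/τ_c. Then τ_c > 0, ω_c > 0, the pair (ω_c, τ_c) is the unique pair of positive reals (ω, τ) satisfying sin(ωτ)/(ωτ) = (δ + β₀β₁)/(2β₀β₁) and (cos(ωτ) − 1)/(ωτ)² = 1/(2β₀β₁τ), and Δ(iω_c, τ_c) = 0 = Δ(−iω_c, τ_c). -/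

import Mathlib

open Real Set


/-- The characteristic function
`Δ(λ,τ) = λ + δ + β₀β₁ − (2β₀β₁/τ)∫_{−τ}^{0} e^{λ s} ds`, for `λ ∈ ℂ`. -/
noncomputable def charFn (δ β₀ β₁ τ : ℝ) (lam : ℂ) : ℂ :=
  lam + (δ : ℂ) + (β₀ : ℂ) * (β₁ : ℂ) -
    ((2 * β₀ * β₁ / τ : ℝ) : ℂ) * ∫ s in (-τ)..(0 : ℝ), Complex.exp (lam * (s : ℂ))

/-- `h(x) = sin(x)/x`. -/
noncomputable def hfun (x : ℝ) : ℝ := Real.sin x / x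

/-- `x₀`, the smallest `x > 0` with `x = tan x` and `h(x) > 0` (numerically `x₀ ≈ 7.725`). -/
noncomputable def xZero : ℝ := sInf {x : ℝ | 0 < x ∧ x = Real.tan x ∧ 0 < hfun x}

/-- The system (11)/(12): `sin(ωτ)/(ωτ) = (δ+β₀β₁)/(2β₀β₁)` and
`(cos(ωτ) − 1)/(ωτ)² = 1/(2β₀β₁τ)`. -/
def sys (δ β₀ β₁ ω τ : ℝ) : Prop :=
  Real.sin (ω * τ) / (ω * τ) = (δ + β₀ * β₁) / (2 * β₀ * β₁) ∧
  (Real.cos (ω * τ) - 1) / (ω * τ) ^ 2 = 1 / (2 * β₀ * β₁ * τ)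

-- phi strictly anti on [2π, 5π/2]
lemma phi_anti : StrictAntiOn (fun x : ℝ => x * cos x - sin x) (Icc (2*π) (5*π/2)) := by
  apply strictAntiOn_of_deriv_neg (convex_Icc _ _)
  · fun_prop
  · intro x hx
    rw [interior_Icc] at hx
    have hd : HasDerivAt (fun x : ℝ => x * cos x - sin x) (-(x * sin x)) x := by
      have := ((hasDerivAt_id x).fun_mul (Real.hasDerivAt_cos x)).fun_sub (Real.hasDerivAt_sin x)
      simp only [id] at this
      exact this.congr_deriv (by ring)
    rw [hd.deriv]
    have hs : 0 < sin x := by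
      have : sin (x - 2*π) > 0 := by
        apply sin_pos_of_pos_of_lt_pi <;> nlinarith [hx.1, hx.2, pi_pos]
      rwa [sin_sub_two_pi] at this
    nlinarith [hx.1, pi_pos]

lemma exists_c : ∃ c ∈ Ioo (2*π) (5*π/2), sin c = c * cos c := by
  have h1 : (2:ℝ)*π ≤ 5*π/2 := by nlinarith [pi_pos]
  have hc : ContinuousOn (fun x : ℝ => x * cos x - sin x) (Icc (2*π) (5*π/2)) := by fun_prop
  have key := intermediate_value_Icc' h1 hc
  have e1 : cos (5*π/2) = 0 := by
    have : (5*π/2 : ℝ) = π/2 + 2*π := by ring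
    rw [this, cos_add_two_pi, cos_pi_div_two]
  have e2 : sin (5*π/2) = 1 := by
    have : (5*π/2 : ℝ) = π/2 + 2*π := by ring
    rw [this, sin_add_two_pi, sin_pi_div_two]
  have h0 : (0:ℝ) ∈ Icc ((fun x : ℝ => x * cos x - sin x) (5*π/2)) ((fun x : ℝ => x * cos x - sin x) (2*π)) := by
    simp only [e1, e2, cos_two_pi, sin_two_pi]
    constructor <;> nlinarith [pi_pos]
  obtain ⟨c, hcmem, hceq⟩ := key h0
  simp only at hceq
  refine ⟨c, ⟨?_, ?_⟩, by linarith⟩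
  · rcases lt_or_eq_of_le hcmem.1 with h | h
    · exact h
    · exfalso; rw [← h] at hceq; simp [cos_two_pi, sin_two_pi] at hceq
  · rcases lt_or_eq_of_le hcmem.2 with h | h
    · exact h
    · exfalso; rw [h, e1, e2] at hceq; nlinarith [pi_pos]

lemma cos_c_pos {c : ℝ} (hc : c ∈ Ioo (2*π) (5*π/2)) : 0 < cos c := by
  have : cos (c - 2*π) > 0 := by
    apply cos_pos_of_mem_Ioo
    constructor <;> nlinarith [hc.1, hc.2, pi_pos]
  rwa [cos_sub_two_pi] at this

lemma c_mem_S {c : ℝ} (hc : c ∈ Ioo (2*π) (5*π/2)) (hceq : sin c = c * cos c) :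
    c ∈ {x : ℝ | 0 < x ∧ x = Real.tan x ∧ 0 < hfun x} := by
  have hcpos : 0 < c := by nlinarith [hc.1, pi_pos]
  have hcos := cos_c_pos hc
  refine ⟨hcpos, ?_, ?_⟩
  · rw [tan_eq_sin_div_cos, hceq]
    field_simp
  · rw [hfun, hceq]
    rw [mul_div_assoc, mul_comm]
    positivity

lemma c_lower_bound {c : ℝ} (hc : c ∈ Ioo (2*π) (5*π/2)) (hceq : sin c = c * cos c)
    (y : ℝ) (hy : y ∈ {x : ℝ | 0 < x ∧ x = Real.tan x ∧ 0 < hfun x}) : c ≤ y := by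
  obtain ⟨hy0, hytan, hyh⟩ := hy
  by_contra hlt
  push_neg at hlt
  -- basic facts about y
  have hsiny : 0 < sin y := by
    rw [hfun] at hyh
    by_contra hs
    push_neg at hs
    nlinarith [div_nonpos_of_nonpos_of_nonneg hs hy0.le, hyh]
  have hcosy : cos y ≠ 0 := by
    intro h
    rw [hytan] at hy0
    rw [tan_eq_sin_div_cos, h, div_zero] at hy0
    exact lt_irrefl _ hy0
  have hsineq : sin y = y * cos y := by
    have := hytan
    rw [tan_eq_sin_div_cos] at this
    field_simp at this
    linarith [this]
  have hcosypos : 0 < cos y := by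
    rcases lt_or_gt_of_ne hcosy with h | h
    · nlinarith
    · exact h
  -- case analysis on y
  rcases lt_or_ge y (π/2) with h1 | h1
  · -- y < π/2 : tan y > y
    have := Real.lt_tan hy0 h1
    rw [← hytan] at this
    exact lt_irrefl _ this
  rcases le_or_gt y (3*π/2) with h2 | h2
  · -- cos y ≤ 0
    have := Real.cos_nonpos_of_pi_div_two_le_of_le h1 (by linarith)
    linarith
  rcases le_or_gt y (2*π) with h3 | h3
  · -- sin y ≤ 0 on [π, 2π]
    have : sin (y - π) ≥ 0 := by
      apply sin_nonneg_of_nonneg_of_le_pi <;> nlinarith [pi_pos]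
    rw [sin_sub_pi] at this
    linarith
  · -- y ∈ (2π, c) : phi y > phi c = 0
    have hmem1 : y ∈ Icc (2*π) (5*π/2) := ⟨h3.le, by linarith [hc.2, hlt]⟩
    have hmem2 : c ∈ Icc (2*π) (5*π/2) := ⟨hc.1.le, hc.2.le⟩
    have := phi_anti hmem1 hmem2 hlt
    simp only at this
    nlinarith [hceq, hsineq]

lemma xZero_eq {c : ℝ} (hc : c ∈ Ioo (2*π) (5*π/2)) (hceq : sin c = c * cos c) :
    xZero = c := by
  rw [xZero]
  apply le_antisymm
  · exact csInf_le ⟨c, fun y hy => c_lower_bound hc hceq y hy⟩ (c_mem_S hc hceq)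
  · exact le_csInf ⟨c, c_mem_S hc hceq⟩ (c_lower_bound hc hceq)

lemma hfun_xZero {c : ℝ} (hc : c ∈ Ioo (2*π) (5*π/2)) (hceq : sin c = c * cos c) :
    hfun xZero = cos c := by
  rw [xZero_eq hc hceq, hfun, hceq]
  have hcpos : 0 < c := by nlinarith [hc.1, pi_pos]
  field_simp


lemma cos_c_sq {c : ℝ} (hceq : sin c = c * cos c) : cos c ^ 2 * (1 + c^2) = 1 := by
  have h0 := sin_sq_add_cos_sq c
  have h2 : sin c ^ 2 = c^2 * cos c ^ 2 := by rw [hceq]; ring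
  linear_combination h0 - h2

lemma cos_c_lt_half {c : ℝ} (hc : c ∈ Ioo (2*π) (5*π/2)) (hceq : sin c = c * cos c) :
    cos c < 1/2 := by
  have h1 := cos_c_sq hceq
  have h2 := cos_c_pos hc
  have hc6 : 6 < c := by nlinarith [hc.1, pi_gt_three]
  have h5 : (37:ℝ) < 1 + c^2 := by nlinarith
  have h6 : cos c ^ 2 ≥ 1/4 → False := by
    intro h6
    nlinarith [h1, h5, h6]
  by_contra hcon
  push_neg at hcon
  exact h6 (by nlinarith)

lemma cos_c_gt {c : ℝ} (hc : c ∈ Ioo (2*π) (5*π/2)) (hceq : sin c = c * cos c) :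
    1/(3*π) < cos c := by
  have h1 := cos_c_sq hceq
  have h2 := cos_c_pos hc
  have h3 := hc.2
  have h4 := hc.1
  have hπ := pi_gt_three
  have h5 : 1 + c^2 < 9*π^2 := by nlinarith
  have h6 : cos c ^ 2 * (9*π^2) > 1 := by nlinarith [sq_nonneg (cos c), mul_pos h2 h2]
  have h7 : 1 < cos c * (3*π) := by nlinarith [mul_pos h2 (show (0:ℝ) < 3*π by positivity)]
  rw [div_lt_iff₀ (by positivity : (0:ℝ) < 3*π)]
  linarith

-- psi bound: sin x ≤ x * cos c on [2π, 3π]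
lemma psi_bound {c : ℝ} (hc : c ∈ Ioo (2*π) (5*π/2)) (hceq : sin c = c * cos c)
    {x : ℝ} (hx : x ∈ Icc (2*π) (3*π)) : sin x ≤ x * cos c := by
  set ψ : ℝ → ℝ := fun x => sin x - x * cos c with hψ
  have hψc : ψ c = 0 := by simp [hψ, hceq]
  have hd : ∀ y : ℝ, HasDerivAt ψ (cos y - cos c) y := by
    intro y
    have := (Real.hasDerivAt_sin y).fun_sub (((hasDerivAt_id y).mul_const (cos c)))
    simpa using this
  have hcos_shift : ∀ y ∈ Icc (2*π) (3*π), cos y = cos (y - 2*π) := fun y _ => (cos_sub_two_pi y).symm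
  have hc3 : c < 3*π := by nlinarith [hc.2, pi_pos]
  have key : ∀ y ∈ Icc (2*π) (3*π), y ≠ c → (y < c → cos c < cos y) ∧ (c < y → cos y < cos c) := by
    intro y hy _
    constructor <;> intro hlt
    · have := Real.strictAntiOn_cos (a := y - 2*π) (b := c - 2*π)
        ⟨by linarith [hy.1], by linarith [hy.2]⟩ ⟨by linarith [hc.1], by linarith⟩ (by linarith)
      rwa [cos_sub_two_pi, cos_sub_two_pi] at this
    · have := Real.strictAntiOn_cos (a := c - 2*π) (b := y - 2*π)
        ⟨by linarith [hc.1], by linarith⟩ ⟨by linarith [hy.1], by linarith [hy.2]⟩ (by linarith)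
      rwa [cos_sub_two_pi, cos_sub_two_pi] at this
  have hmono : StrictMonoOn ψ (Icc (2*π) c) := by
    apply strictMonoOn_of_deriv_pos (convex_Icc _ _)
    · fun_prop
    · intro y hy
      rw [interior_Icc] at hy
      rw [(hd y).deriv]
      have := (key y ⟨hy.1.le, by linarith [hy.2]⟩ (ne_of_lt hy.2)).1 hy.2
      linarith
  have hanti : StrictAntiOn ψ (Icc c (3*π)) := by
    apply strictAntiOn_of_deriv_neg (convex_Icc _ _)
    · fun_prop
    · intro y hy
      rw [interior_Icc] at hy
      rw [(hd y).deriv]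
      have := (key y ⟨by linarith [hy.1, hc.1], hy.2.le⟩ (ne_of_gt hy.1)).2 hy.1
      linarith
  have : ψ x ≤ 0 := by
    rcases le_or_gt x c with h | h
    · rcases eq_or_lt_of_le h with h' | h'
      · rw [h', hψc]
      · have := hmono ⟨hx.1, h'.le⟩ ⟨hc.1.le, le_refl c⟩ h'
        rw [hψc] at this
        linarith
    · have := hanti ⟨le_refl c, by linarith⟩ ⟨h.le, hx.2⟩ h
      rw [hψc] at this
      linarith
  simpa [hψ] using this

lemma master_bound {c : ℝ} (hc : c ∈ Ioo (2*π) (5*π/2)) (hceq : sin c = c * cos c)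
    {x : ℝ} (hx : π ≤ x) : hfun x ≤ cos c := by
  have hxpos : 0 < x := lt_of_lt_of_le pi_pos hx
  have hcos := cos_c_pos hc
  rcases le_or_gt x (3*π) with h3 | h3
  · rcases le_or_gt (sin x) 0 with hs | hs
    · have : hfun x ≤ 0 := div_nonpos_of_nonpos_of_nonneg hs hxpos.le
      linarith
    · -- sin x > 0, π ≤ x ≤ 3π forces x > 2π
      have h2pi : 2*π < x := by
        by_contra hle
        push_neg at hle
        have : sin (x - π) ≥ 0 := by
          apply sin_nonneg_of_nonneg_of_le_pi <;> linarith
        rw [sin_sub_pi] at this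
        linarith
      have := psi_bound hc hceq ⟨h2pi.le, h3⟩
      rw [hfun, div_le_iff₀ hxpos]
      linarith [this]
  · -- x > 3π : hfun x ≤ 1/x ≤ 1/(3π) < cos c
    have hgt := cos_c_gt hc hceq
    have h1 : hfun x ≤ 1/x := by
      rw [hfun, div_le_div_iff₀ hxpos hxpos]
      nlinarith [sin_le_one x, hxpos]
    have h2 : 1/x < 1/(3*π) := by
      apply one_div_lt_one_div_of_lt (by positivity) h3
    linarith

lemma hfun_anti : StrictAntiOn hfun (Ioo 0 π) := by
  apply strictAntiOn_of_deriv_neg (convex_Ioo _ _)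
  · intro x hx
    apply ContinuousAt.continuousWithinAt
    apply ContinuousAt.div (Real.continuous_sin.continuousAt) continuousAt_id (ne_of_gt hx.1)
  · intro x hx
    rw [interior_Ioo] at hx
    have hx0 : x ≠ 0 := ne_of_gt hx.1
    have hd : HasDerivAt hfun ((cos x * x - sin x * 1) / x^2) x := by
      exact (Real.hasDerivAt_sin x).div (hasDerivAt_id x) hx0
    rw [hd.deriv]
    apply div_neg_of_neg_of_pos _ (by positivity)
    rcases lt_or_ge x (π/2) with h | h
    · have htan := Real.lt_tan hx.1 h
      have hcos : 0 < cos x := cos_pos_of_mem_Ioo ⟨by linarith [hx.1, pi_pos], h⟩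
      rw [tan_eq_sin_div_cos, lt_div_iff₀ hcos] at htan
      nlinarith
    · have hcos : cos x ≤ 0 := Real.cos_nonpos_of_pi_div_two_le_of_le h (by linarith [hx.2, pi_pos])
      have hsin : 0 < sin x := sin_pos_of_pos_of_lt_pi hx.1 hx.2
      nlinarith [hx.1]

lemma charFn_zero (δ β₀ β₁ ω τ : ℝ) (hω : ω ≠ 0) (hτ : τ ≠ 0)
    (E1 : 2*β₀*β₁*Real.sin (ω*τ) = (δ + β₀*β₁)*(ω*τ))
    (E2 : 2*β₀*β₁*τ*(Real.cos (ω*τ) - 1) = (ω*τ)^2) :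
    charFn δ β₀ β₁ τ (Complex.I*ω) = 0 ∧ charFn δ β₀ β₁ τ (-(Complex.I*ω)) = 0 := by
  have hωC : (ω:ℂ) ≠ 0 := by exact_mod_cast hω
  have hτC : (τ:ℂ) ≠ 0 := by exact_mod_cast hτ
  have hIω : (Complex.I * ω) ≠ 0 := mul_ne_zero Complex.I_ne_zero hωC
  have hIω' : (-(Complex.I * ω)) ≠ 0 := neg_ne_zero.mpr hIω
  have E1' : ((2*β₀*β₁*Real.sin (ω*τ) : ℝ):ℂ) = (((δ + β₀*β₁)*(ω*τ) : ℝ):ℂ) := by exact_mod_cast E1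
  have E2r : 2*β₀*β₁*(Real.cos (ω*τ) - 1) = ω^2*τ := by
    apply mul_left_cancel₀ hτ
    linear_combination E2
  have E2' : ((2*β₀*β₁*(Real.cos (ω*τ) - 1) : ℝ):ℂ) = ((ω^2*τ : ℝ):ℂ) := by exact_mod_cast E2r
  push_cast at E1' E2'
  constructor
  · unfold charFn
    rw [integral_exp_mul_complex hIω]
    have e1 : Complex.exp ((Complex.I*(ω:ℂ)) * ((-τ:ℝ):ℂ)) =
        (Real.cos (ω*τ) : ℂ) - (Real.sin (ω*τ):ℂ) * Complex.I := by
      have h : ((Complex.I*(ω:ℂ)) * ((-τ:ℝ):ℂ)) = ((-(ω*τ):ℝ):ℂ) * Complex.I := by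
        push_cast; ring
      rw [h, Complex.exp_mul_I, ← Complex.ofReal_cos, ← Complex.ofReal_sin,
        Real.cos_neg, Real.sin_neg]
      push_cast; ring
    rw [e1]
    simp only [Complex.ofReal_mul, Complex.ofReal_zero, mul_zero, Complex.exp_zero]
    push_cast
    field_simp
    linear_combination (-Complex.I) * E1' + E2' + ((ω:ℂ)^2*(τ:ℂ)) * Complex.I_sq
  · unfold charFn
    rw [integral_exp_mul_complex hIω']
    have e1 : Complex.exp ((-(Complex.I*(ω:ℂ))) * ((-τ:ℝ):ℂ)) =
        (Real.cos (ω*τ) : ℂ) + (Real.sin (ω*τ):ℂ) * Complex.I := by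
      have h : ((-(Complex.I*(ω:ℂ))) * ((-τ:ℝ):ℂ)) = (((ω*τ):ℝ):ℂ) * Complex.I := by
        push_cast; ring
      rw [h, Complex.exp_mul_I, ← Complex.ofReal_cos, ← Complex.ofReal_sin]
    rw [e1]
    simp only [Complex.ofReal_mul, Complex.ofReal_zero, mul_zero, Complex.exp_zero]
    push_cast
    field_simp
    linear_combination (-Complex.I) * E1' - E2' - ((ω:ℂ)^2*(τ:ℂ)) * Complex.I_sq

set_option maxHeartbeats 1000000 in
/-- with `x_c ∈ (0,π)` the solution of `h(x) = (δ+β₀β₁)/(2β₀β₁)`,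
`τ_c = x_c²/(2β₀β₁(cos x_c − 1))` and `ω_c = x_c/τ_c`, one has `τ_c > 0`, `ω_c > 0`,
`(ω_c, τ_c)` is the unique pair of positive reals solving the system, and
`Δ(± i ω_c, τ_c) = 0`. -/
theorem critical_pair_unique
    (δ β₀ β₁ x_c τ_c ω_c : ℝ) (hδ : 0 < δ) (hβ₀ : 0 < β₀)
    (hβ₁ : β₁ < -δ / (β₀ * (1 - 2 * hfun xZero)))
    (hx_c : x_c ∈ Set.Ioo 0 Real.pi)
    (hx_c_sol : hfun x_c = (δ + β₀ * β₁) / (2 * β₀ * β₁))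
    (hτ_c : τ_c = x_c ^ 2 / (2 * β₀ * β₁ * (Real.cos x_c - 1)))
    (hω_c : ω_c = x_c / τ_c) :
    0 < τ_c ∧ 0 < ω_c ∧
    sys δ β₀ β₁ ω_c τ_c ∧
    (∀ ω τ : ℝ, 0 < ω → 0 < τ → sys δ β₀ β₁ ω τ → ω = ω_c ∧ τ = τ_c) ∧
    charFn δ β₀ β₁ τ_c (Complex.I * (ω_c : ℂ)) = 0 ∧
    charFn δ β₀ β₁ τ_c (-(Complex.I * (ω_c : ℂ))) = 0 := by
  obtain ⟨c, hc, hceq⟩ := exists_c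
  have hfx0 : hfun xZero = cos c := hfun_xZero hc hceq
  have hcos_pos := cos_c_pos hc
  have hhalf := cos_c_lt_half hc hceq
  have hden_pos : 0 < β₀ * (1 - 2 * hfun xZero) := by
    rw [hfx0]
    apply mul_pos hβ₀
    linarith
  have hβ₁neg : β₁ < 0 := by
    have : -δ / (β₀ * (1 - 2 * hfun xZero)) < 0 := div_neg_of_neg_of_pos (by linarith) hden_pos
    linarith
  have hββ : 2 * β₀ * β₁ < 0 := by nlinarith
  have hββ' : 2 * β₀ * β₁ ≠ 0 := ne_of_lt hββ
  -- r > cos c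
  rw [lt_div_iff₀ hden_pos, hfx0] at hβ₁
  have hr_gt : cos c < (δ + β₀ * β₁) / (2 * β₀ * β₁) := by
    rw [lt_div_iff_of_neg hββ]
    nlinarith
  have hr_pos : 0 < (δ + β₀ * β₁) / (2 * β₀ * β₁) := lt_trans hcos_pos hr_gt
  -- x_c facts
  obtain ⟨hx_c0, hx_cπ⟩ := hx_c
  have hx_cne : x_c ≠ 0 := ne_of_gt hx_c0
  have hcosxc : cos x_c < 1 := by
    have := Real.strictAntiOn_cos (a := 0) (b := x_c) ⟨le_refl 0, pi_pos.le⟩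
      ⟨hx_c0.le, hx_cπ.le⟩ hx_c0
    rwa [cos_zero] at this
  have hτpos : 0 < τ_c := by
    rw [hτ_c]
    exact div_pos (by positivity) (mul_pos_of_neg_of_neg hββ (by linarith))
  have hτne : τ_c ≠ 0 := ne_of_gt hτpos
  have hωpos : 0 < ω_c := by
    rw [hω_c]; exact div_pos hx_c0 hτpos
  have hx_eq : ω_c * τ_c = x_c := by
    rw [hω_c]; field_simp
  rw [hfun] at hx_c_sol
  -- sys holds
  have hsys : sys δ β₀ β₁ ω_c τ_c := by
    constructor
    · rw [hx_eq]; exact hx_c_sol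
    · have hdpos : 0 < 2 * β₀ * β₁ * (Real.cos x_c - 1) := mul_pos_of_neg_of_neg hββ (by linarith)
      have hne : 2*β₀*β₁*τ_c ≠ 0 := ne_of_lt (mul_neg_of_neg_of_pos hββ hτpos)
      rw [hx_eq, div_eq_div_iff (by positivity) hne, hτ_c]
      field_simp [ne_of_gt hdpos]
      exact div_self (ne_of_gt (by nlinarith))
  -- generic: sys → x = x_c and equations
  have key : ∀ ω τ : ℝ, 0 < ω → 0 < τ → sys δ β₀ β₁ ω τ → ω * τ = x_c ∧ τ = τ_c := by
    intro ω τ hω hτ ⟨e1, e2⟩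
    have hxpos : 0 < ω * τ := mul_pos hω hτ
    have hxlt : ω * τ < π := by
      by_contra hge
      push_neg at hge
      have hb := master_bound hc hceq hge
      rw [hfun] at hb
      rw [e1] at hb
      linarith
    have hxeq : ω * τ = x_c := by
      have h1 : hfun (ω * τ) = hfun x_c := by
        rw [hfun, hfun, e1, hx_c_sol]
      exact hfun_anti.injOn ⟨hxpos, hxlt⟩ ⟨hx_c0, hx_cπ⟩ h1
    refine ⟨hxeq, ?_⟩
    rw [hxeq] at e2
    have e2' := hsys.2
    rw [hx_eq] at e2'
    rw [e2'] at e2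
    have hne1 : 2 * β₀ * β₁ * τ_c ≠ 0 := ne_of_lt (mul_neg_of_neg_of_pos hββ hτpos)
    have hne2 : 2 * β₀ * β₁ * τ ≠ 0 := ne_of_lt (mul_neg_of_neg_of_pos hββ hτ)
    rw [div_eq_div_iff hne1 hne2] at e2
    have h3 : (2 * β₀ * β₁) * τ = (2 * β₀ * β₁) * τ_c := by linarith [e2]
    exact mul_left_cancel₀ hββ' h3
  -- equations for charFn
  have E1 : 2*β₀*β₁*Real.sin (ω_c*τ_c) = (δ + β₀*β₁)*(ω_c*τ_c) := by
    have := hsys.1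
    rw [div_eq_div_iff (by rw [hx_eq]; exact hx_cne) hββ'] at this
    linarith [this]
  have E2 : 2*β₀*β₁*τ_c*(Real.cos (ω_c*τ_c) - 1) = (ω_c*τ_c)^2 := by
    have := hsys.2
    have hx2 : (0:ℝ) < (ω_c*τ_c)^2 := by positivity
    rw [div_eq_div_iff (ne_of_gt hx2) (ne_of_lt (mul_neg_of_neg_of_pos hββ hτpos))] at this
    linarith [this]
  obtain ⟨hch1, hch2⟩ := charFn_zero δ β₀ β₁ ω_c τ_c (ne_of_gt hωpos) hτne E1 E2
  refine ⟨hτpos, hωpos, hsys, ?_, hch1, hch2⟩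
  intro ω τ hω hτ hs
  obtain ⟨hxeq, hteq⟩ := key ω τ hω hτ hs
  refine ⟨?_, hteq⟩
  rw [hteq] at hxeq
  have : ω * τ_c = ω_c * τ_c := by rw [hxeq, hx_eq]
  exact mul_right_cancel₀ hτne this
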